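/- Subspace-diskcyclic criterion: Let T ∈ B(X), M a closed subspace of X. Suppose there exist an increasing sequence (n_k) of positive integers and dense subsets D₁, D₂ of M such that: (a) for every y ∈ D₂ there is a sequence (x_k) in M with ‖x_k‖ → 0 and T^{n_k} x_k → y; (b) ‖T^{n_k} x‖·‖x_k‖ → 0 for all x ∈ D₁; (c) T^{n_k}(M) ⊆ M for all k. Then T is M-diskcyclic. -/

import Mathlib

open Filter Topology

/-- The disk orbit of `x` under `T`. -/
def diskOrb {X : Type*} [NormedAddCommGroup X] [NormedSpace ℂ X] (T : X →L[ℂ] X) (x : X) :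
    Set X := {y | ∃ (α : ℂ) (n : ℕ), ‖α‖ ≤ 1 ∧ y = α • (T ^ n) x}

theorem stmt_5 {X : Type*} [NormedAddCommGroup X] [NormedSpace ℂ X] [CompleteSpace X]
    [TopologicalSpace.SeparableSpace X]
    (T : X →L[ℂ] X) (M : Submodule ℂ X) (hMcl : IsClosed (M : Set X))
    (hMbot : M ≠ ⊥) (hMtop : M ≠ ⊤)
    (nk : ℕ → ℕ) (hmono : StrictMono nk) (hpos : ∀ k, 0 < nk k)
    (D₁ D₂ : Set X) (hD₁ : D₁ ⊆ (M : Set X)) (hD₂ : D₂ ⊆ (M : Set X))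
    (hD₁dense : (M : Set X) ⊆ closure D₁) (hD₂dense : (M : Set X) ⊆ closure D₂)
    (hcrit : ∀ y ∈ D₂, ∃ xs : ℕ → X, (∀ k, xs k ∈ M) ∧
      Tendsto (fun k => ‖xs k‖) atTop (𝓝 0) ∧
      Tendsto (fun k => (T ^ nk k) (xs k)) atTop (𝓝 y) ∧
      ∀ x ∈ D₁, Tendsto (fun k => ‖(T ^ nk k) x‖ * ‖xs k‖) atTop (𝓝 0))
    (hinv : ∀ k, ∀ m ∈ M, (T ^ nk k) m ∈ M) :
    ∃ x : X, (M : Set X) ⊆ closure (diskOrb T x ∩ (M : Set X)) := by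
  classical
  haveI : CompleteSpace M := hMcl.completeSpace_coe
  haveI : BaireSpace M := BaireSpace.of_completelyPseudoMetrizable
  haveI : Nonempty M := ⟨0, M.zero_mem⟩
  obtain ⟨v, hv⟩ := TopologicalSpace.exists_dense_seq M
  set O : ℕ × ℕ → Set M := fun jm =>
    {x : M | ∃ (k : ℕ) (α : ℂ), ‖α‖ ≤ 1 ∧
      ‖α • (T ^ nk k) (x : X) - (v jm.1 : X)‖ < 1 / (jm.2 + 1)} with hO
  have hOopen : ∀ jm, IsOpen (O jm) := by
    intro jm
    have heq : O jm = ⋃ (k : ℕ) (α : ℂ) (_ : ‖α‖ ≤ 1),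
        {x : M | ‖α • (T ^ nk k) (x : X) - (v jm.1 : X)‖ < 1 / (jm.2 + 1)} := by
      ext x
      simp [hO]
    rw [heq]
    refine isOpen_iUnion fun k => isOpen_iUnion fun α => isOpen_iUnion fun _ => ?_
    have hc : Continuous fun x : M => ‖α • (T ^ nk k) (x : X) - (v jm.1 : X)‖ := by
      fun_prop
    exact isOpen_lt hc continuous_const
  have hOdense : ∀ jm, Dense (O jm) := by
    rintro ⟨j, m⟩
    rw [Metric.dense_iff]
    intro u δ hδ
    set ε : ℝ := 1 / ((m : ℝ) + 1) with hε
    have hεpos : 0 < ε := by positivity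
    obtain ⟨d₁, hd₁D, hd₁u⟩ := Metric.mem_closure_iff.mp (hD₁dense u.2) (δ / 2) (by linarith)
    obtain ⟨d₂, hd₂D, hd₂v⟩ := Metric.mem_closure_iff.mp (hD₂dense (v j).2) (ε / 2)
      (by positivity)
    obtain ⟨xs, hxsM, hxs0, hTxs, hprod⟩ := hcrit d₂ hd₂D
    have hp : Tendsto (fun k => ‖(T ^ nk k) d₁‖ * ‖xs k‖) atTop (𝓝 0) := hprod d₁ hd₁D
    set p : ℕ → ℝ := fun k => ‖(T ^ nk k) d₁‖ * ‖xs k‖ with hpdef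
    have hp0 : ∀ k, 0 ≤ p k := fun k => mul_nonneg (norm_nonneg _) (norm_nonneg _)
    set s : ℕ → ℝ := fun k => Real.sqrt (p k) + 1 / ((k : ℝ) + 1) with hsdef
    have hspos : ∀ k, 0 < s k := fun k => by
      have := Real.sqrt_nonneg (p k); have : (0:ℝ) < 1 / ((k:ℝ)+1) := by positivity
      simp only [hsdef]; positivity
    set a : ℕ → ℝ := fun k => (s k)⁻¹ with hadef
    have hapos : ∀ k, 0 < a k := fun k => inv_pos.mpr (hspos k)
    set β : ℕ → ℝ := fun k => max 1 (‖(T ^ nk k) d₁‖ * a k) with hβdef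
    have hβ1 : ∀ k, 1 ≤ β k := fun k => le_max_left _ _
    have hβpos : ∀ k, 0 < β k := fun k => lt_of_lt_of_le one_pos (hβ1 k)
    have hsq : Tendsto (fun k => Real.sqrt (p k)) atTop (𝓝 0) := by
      have h := (Real.continuous_sqrt.tendsto 0).comp hp
      simpa [Function.comp_def] using h
    have hs0 : Tendsto s atTop (𝓝 0) := by
      have := hsq.add tendsto_one_div_add_atTop_nhds_zero_nat
      simpa [hsdef] using this
    -- a k * p k ≤ √(p k)
    have hap : ∀ k, a k * p k ≤ Real.sqrt (p k) := by
      intro k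
      rcases eq_or_lt_of_le (hp0 k) with h | h
      · simp [← h]
      · have hsq' : 0 < Real.sqrt (p k) := Real.sqrt_pos.mpr h
        have hale : a k ≤ (Real.sqrt (p k))⁻¹ := by
          apply inv_anti₀ hsq'
          simp only [hsdef, le_add_iff_nonneg_right]
          positivity
        calc a k * p k ≤ (Real.sqrt (p k))⁻¹ * p k :=
              mul_le_mul_of_nonneg_right hale (hp0 k)
          _ = p k / Real.sqrt (p k) := by ring
          _ = Real.sqrt (p k) := Real.div_sqrt
    have hβxs : Tendsto (fun k => β k * ‖xs k‖) atTop (𝓝 0) := by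
      have hub : ∀ k, β k * ‖xs k‖ ≤ ‖xs k‖ + Real.sqrt (p k) := by
        intro k
        have h1 : β k ≤ 1 + ‖(T ^ nk k) d₁‖ * a k := by
          apply max_le
          · nlinarith [mul_nonneg (norm_nonneg ((T ^ nk k) d₁)) (hapos k).le]
          · linarith
        have h2 : β k * ‖xs k‖ ≤ (1 + ‖(T ^ nk k) d₁‖ * a k) * ‖xs k‖ :=
          mul_le_mul_of_nonneg_right h1 (norm_nonneg _)
        have h3 : (1 + ‖(T ^ nk k) d₁‖ * a k) * ‖xs k‖ = ‖xs k‖ + a k * p k := by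
          simp only [hpdef]; ring
        calc β k * ‖xs k‖ ≤ ‖xs k‖ + a k * p k := by rw [← h3]; exact h2
          _ ≤ ‖xs k‖ + Real.sqrt (p k) := by linarith [hap k]
      have hlim : Tendsto (fun k => ‖xs k‖ + Real.sqrt (p k)) atTop (𝓝 0) := by
        simpa using hxs0.add hsq
      exact squeeze_zero (fun k => mul_nonneg (hβpos k).le (norm_nonneg _)) hub hlim
    have hTd₁β : Tendsto (fun k => ‖(T ^ nk k) d₁‖ / β k) atTop (𝓝 0) := by
      have hub : ∀ k, ‖(T ^ nk k) d₁‖ / β k ≤ s k := by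
        intro k
        rw [div_le_iff₀ (hβpos k)]
        have h1 : ‖(T ^ nk k) d₁‖ * a k ≤ β k := le_max_right _ _
        have h2 : ‖(T ^ nk k) d₁‖ = (‖(T ^ nk k) d₁‖ * a k) * s k := by
          have : a k * s k = 1 := inv_mul_cancel₀ (hspos k).ne'
          rw [mul_assoc, this, mul_one]
        rw [h2, mul_comm (s k) (β k)]
        exact mul_le_mul_of_nonneg_right h1 (hspos k).le
      exact squeeze_zero (fun k => div_nonneg (norm_nonneg _) (hβpos k).le) hub hs0
    set w : ℕ → X := fun k => d₁ + ((β k : ℝ) : ℂ) • xs k with hwdef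
    have hwM : ∀ k, w k ∈ M := fun k => M.add_mem (hD₁ hd₁D) (M.smul_mem _ (hxsM k))
    have hβC : ∀ k, ((β k : ℝ) : ℂ) ≠ 0 := fun k => by
      exact_mod_cast (hβpos k).ne'
    have hnormβ : ∀ k, ‖((β k : ℝ) : ℂ)‖ = β k := by
      intro k
      rw [Complex.norm_real, Real.norm_eq_abs, abs_of_pos (hβpos k)]
    have hw_tendsto : Tendsto w atTop (𝓝 d₁) := by
      rw [tendsto_iff_norm_sub_tendsto_zero]
      have heq : ∀ k, ‖w k - d₁‖ = β k * ‖xs k‖ := by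
        intro k
        simp only [hwdef, add_sub_cancel_left, norm_smul, hnormβ k]
      simpa only [heq] using hβxs
    set α : ℕ → ℂ := fun k => (((β k : ℝ) : ℂ))⁻¹ with hαdef
    have hα1 : ∀ k, ‖α k‖ ≤ 1 := by
      intro k
      simp only [hαdef, norm_inv, hnormβ k]
      rw [inv_le_one_iff₀]
      right; exact hβ1 k
    have hαT : Tendsto (fun k => α k • (T ^ nk k) (w k)) atTop (𝓝 d₂) := by
      have key : ∀ k, α k • (T ^ nk k) (w k)
          = α k • (T ^ nk k) d₁ + (T ^ nk k) (xs k) := by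
        intro k
        simp only [hwdef, map_add, map_smul, smul_add, smul_smul,
          inv_mul_cancel₀ (hβC k), one_smul, hαdef]
      have h1 : Tendsto (fun k => α k • (T ^ nk k) d₁) atTop (𝓝 0) := by
        rw [tendsto_zero_iff_norm_tendsto_zero]
        have heq : ∀ k, ‖α k • (T ^ nk k) d₁‖ = ‖(T ^ nk k) d₁‖ / β k := by
          intro k
          simp only [hαdef, norm_smul, norm_inv, hnormβ k]
          ring
        simpa only [heq] using hTd₁β
      have := h1.add hTxs
      rw [zero_add] at this
      simpa only [key] using this
    have hev1 : ∀ᶠ k in atTop, dist (w k) d₁ < δ / 2 :=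
      Metric.tendsto_nhds.mp hw_tendsto (δ / 2) (by linarith)
    have hev2 : ∀ᶠ k in atTop, dist (α k • (T ^ nk k) (w k)) d₂ < ε / 2 :=
      Metric.tendsto_nhds.mp hαT (ε / 2) (by positivity)
    obtain ⟨k, hk1, hk2⟩ := (hev1.and hev2).exists
    refine ⟨⟨w k, hwM k⟩, ?_, ?_⟩
    · rw [Metric.mem_ball, Subtype.dist_eq]
      calc dist (w k) (u : X) ≤ dist (w k) d₁ + dist d₁ (u : X) := dist_triangle _ _ _
        _ < δ / 2 + δ / 2 := by
            have : dist d₁ (u : X) < δ / 2 := by rw [dist_comm]; exact hd₁u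
            linarith
        _ = δ := by ring
    · refine ⟨k, α k, hα1 k, ?_⟩
      have h1 : ‖α k • (T ^ nk k) (w k) - d₂‖ < ε / 2 := by
        rw [← dist_eq_norm]; exact hk2
      have h2 : ‖d₂ - (v j : X)‖ < ε / 2 := by
        rw [← dist_eq_norm, dist_comm]; exact hd₂v
      calc ‖α k • (T ^ nk k) (w k) - (v j : X)‖
          ≤ ‖α k • (T ^ nk k) (w k) - d₂‖ + ‖d₂ - (v j : X)‖ := norm_sub_le_norm_sub_add_norm_sub _ _ _
        _ < ε / 2 + ε / 2 := by linarith
        _ = ε := by ring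
  have hdense : Dense (⋂ jm, O jm) := dense_iInter_of_isOpen hOopen hOdense
  obtain ⟨x₀, hx₀⟩ := hdense.nonempty
  refine ⟨(x₀ : X), ?_⟩
  intro y hy
  rw [Metric.mem_closure_iff]
  intro ε hε
  obtain ⟨j, hj⟩ := hv.exists_dist_lt (⟨y, hy⟩ : M) (show (0:ℝ) < ε / 2 by linarith)
  obtain ⟨m, hm⟩ := exists_nat_one_div_lt (show (0:ℝ) < ε / 2 by linarith)
  obtain ⟨k, α, hα, hlt⟩ := Set.mem_iInter.mp hx₀ (j, m)
  refine ⟨α • (T ^ nk k) (x₀ : X), ⟨⟨α, nk k, hα, rfl⟩, M.smul_mem _ (hinv k _ x₀.2)⟩, ?_⟩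
  have h1 : dist y ((v j : X)) < ε / 2 := by
    have := hj; rwa [Subtype.dist_eq] at this
  have h2 : dist ((v j : X)) (α • (T ^ nk k) (x₀ : X)) < ε / 2 := by
    rw [dist_comm, dist_eq_norm]
    exact lt_trans hlt hm
  calc dist y (α • (T ^ nk k) (x₀ : X))
      ≤ dist y ((v j : X)) + dist ((v j : X)) (α • (T ^ nk k) (x₀ : X)) := dist_triangle _ _ _
    _ < ε / 2 + ε / 2 := by linarith
    _ = ε := by ring
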